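/- There exists a k-linear differential operator D' on k[t] with D'(1) = 0 and D'(g) = 1, for any fixed nonzero non-unit g ∈ k[t]; consequently, for g ∈ I and D = f·D' ∈ D_A, one has D(A) ⊆ I but D(g) = f ∉ I². -/

import Mathlib

open Polynomial

/-- The operator of multiplication by the polynomial `p`. -/
noncomputable def mulOp {k : Type*} [CommRing k] (p : k[X]) : Module.End k k[X] :=
  LinearMap.mulLeft k p

/-- The Weyl algebra `D_B`, realized as the subalgebra of `k`-linear endomorphisms of `k[t]`
generated by multiplication by `t` and the derivative `∂`. -/
noncomputable def Weyl (k : Type*) [CommRing k] : Subalgebra k (Module.End k k[X]) :=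
  Algebra.adjoin k {mulOp X, (derivative : k[X] →ₗ[k] k[X])}

/-- The left ideal `I·D_B` where `I = f·k[t]`: the `k`-span of operators `g·D`
with `g ∈ I` and `D ∈ D_B`. -/
noncomputable def IDB {k : Type*} [CommRing k] (f : k[X]) : Submodule k (Module.End k k[X]) :=
  Submodule.span k {E | ∃ g D, g ∈ Ideal.span {f} ∧ D ∈ Weyl k ∧ E = mulOp g * D}

/-- Membership in `D_A = k + I·D_B`. -/
def memDA {k : Type*} [CommRing k] (f : k[X]) (E : Module.End k k[X]) : Prop :=
  ∃ c : k, E - algebraMap k (Module.End k k[X]) c ∈ IDB f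

/-- Membership in `A = k + I` where `I = f·k[t]`. -/
def memA {k : Type*} [CommRing k] (f : k[X]) (p : k[X]) : Prop :=
  ∃ c : k, p - C c ∈ Ideal.span {f}

/-- `f` is a product of `r ≥ 2` pairwise coprime irreducible polynomials. -/
def NiceF {k : Type*} [CommRing k] (f : k[X]) : Prop :=
  ∃ (r : ℕ) (fs : Fin r → k[X]), 2 ≤ r ∧ (∀ i, Irreducible (fs i)) ∧
    (∀ i j, i ≠ j → IsCoprime (fs i) (fs j)) ∧ f = ∏ i, fs i


/-- for any nonzero non-unit `g` there is `D' ∈ D_B` with `D'(1) = 0`, `D'(g) = 1`;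
consequently if `g ∈ I` then `D = f·D'` maps `A` into `I`, `D(g) = f`, and `f ∉ I²`. -/
theorem stmt1 {k : Type*} [Field k] [CharZero k] (f : k[X]) (hf : NiceF f)
    (g : k[X]) (hg0 : g ≠ 0) (hgu : ¬ IsUnit g) :
    ∃ D' ∈ Weyl k, D' 1 = 0 ∧ D' g = 1 ∧
      (g ∈ Ideal.span {f} →
        (∀ a, memA f a → (mulOp f * D') a ∈ Ideal.span {f}) ∧
        (mulOp f * D') g = f ∧ f ∉ (Ideal.span {f} : Ideal k[X]) ^ 2) := by
  classical
  set n := g.natDegree with hn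
  have hn1 : 0 < n := by
    rcases Nat.eq_zero_or_pos n with h | h
    · exfalso
      apply hgu
      rw [g.eq_C_of_natDegree_eq_zero h]
      exact isUnit_C.mpr (IsUnit.mk0 _ (fun hc0 => hg0 (by
        rw [g.eq_C_of_natDegree_eq_zero h, hc0, map_zero])))
    · exact h
  have hlc : g.leadingCoeff ≠ 0 := leadingCoeff_ne_zero.mpr hg0
  have hfac : (n.factorial : k) ≠ 0 := Nat.cast_ne_zero.mpr n.factorial_ne_zero
  set c : k := ((n.factorial : k) * g.leadingCoeff)⁻¹ with hc
  set d : Module.End k k[X] := (derivative : k[X] →ₗ[k] k[X]) with hd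
  refine ⟨c • d ^ n, ?_, ?_, ?_, ?_⟩
  · exact Subalgebra.smul_mem _ (Subalgebra.pow_mem _ (Algebra.subset_adjoin (by simp [hd])) n) c
  · have : (d ^ n) (1 : k[X]) = derivative^[n] 1 := Module.End.pow_apply d n 1
    rw [LinearMap.smul_apply, this, iterate_derivative_one hn1, smul_zero]
  · have hpow : (d ^ n) g = derivative^[n] g := Module.End.pow_apply d n g
    have hdeg : (derivative^[n] g).natDegree = 0 :=
      Nat.le_zero.mp (by simpa [← hn] using g.natDegree_iterate_derivative n)
    have hcoe : (derivative^[n] g).coeff 0 = (n.factorial : k) * g.leadingCoeff := by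
      rw [coeff_iterate_derivative, zero_add, Nat.descFactorial_self, nsmul_eq_mul]
      rfl
    have hval : derivative^[n] g = C ((n.factorial : k) * g.leadingCoeff) := by
      rw [(derivative^[n] g).eq_C_of_natDegree_eq_zero hdeg, hcoe]
    rw [LinearMap.smul_apply, hpow, hval, smul_C, smul_eq_mul, hc,
      inv_mul_cancel₀ (mul_ne_zero hfac hlc), map_one]
  · intro hgI
    have hD'g : (c • d ^ n) g = 1 := by
      have hpow : (d ^ n) g = derivative^[n] g := Module.End.pow_apply d n g
      have hdeg : (derivative^[n] g).natDegree = 0 :=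
        Nat.le_zero.mp (by simpa [← hn] using g.natDegree_iterate_derivative n)
      have hcoe : (derivative^[n] g).coeff 0 = (n.factorial : k) * g.leadingCoeff := by
        rw [coeff_iterate_derivative, zero_add, Nat.descFactorial_self, nsmul_eq_mul]
        rfl
      have hval : derivative^[n] g = C ((n.factorial : k) * g.leadingCoeff) := by
        rw [(derivative^[n] g).eq_C_of_natDegree_eq_zero hdeg, hcoe]
      rw [LinearMap.smul_apply, hpow, hval, smul_C, smul_eq_mul, hc,
        inv_mul_cancel₀ (mul_ne_zero hfac hlc), map_one]
    refine ⟨?_, ?_, ?_⟩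
    · intro a _
      show f * (c • d ^ n) a ∈ Ideal.span {f}
      exact Ideal.mul_mem_right _ _ (Ideal.mem_span_singleton_self f)
    · show f * (c • d ^ n) g = f
      rw [hD'g, mul_one]
    · intro hmem
      obtain ⟨r, fs, hr, hirr, _, hprod⟩ := hf
      have hf0 : f ≠ 0 := by
        rw [hprod]
        exact Finset.prod_ne_zero_iff.mpr fun i _ => (hirr i).ne_zero
      have hfu : ¬ IsUnit f := by
        intro hu
        have : IsUnit (fs ⟨0, by omega⟩) := by
          refine isUnit_of_dvd_unit ?_ hu
          rw [hprod]
          exact Finset.dvd_prod_of_mem fs (Finset.mem_univ _)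
        exact (hirr _).not_isUnit this
      rw [Ideal.span_singleton_pow, Ideal.mem_span_singleton] at hmem
      obtain ⟨q, hq⟩ := hmem
      apply hfu
      have this2 : f * 1 = f * (f * q) := by
        rw [mul_one]; nth_rewrite 1 [hq]; ring
      have hfq : (1 : k[X]) = f * q := mul_left_cancel₀ hf0 this2
      exact IsUnit.of_mul_eq_one q hfq.symm
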